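/- Let 1 < p < ∞ with conjugate exponent p' = p/(p-1), and let F : ℝⁿ → ℝ be nonnegative, differentiable, convex and p-homogeneous, with 𝒜 = ∇F. Then the generalized Hölder inequality holds: for all ξ, η ∈ ℝⁿ, |𝒜(ξ)·η| ≤ (𝒜(ξ)·ξ)^{1/p'} (𝒜(η)·η)^{1/p}. -/
import Mathlib

open scoped RealInnerProductSpace

section aux
variable {n : ℕ}

-- inner product of gradient equals fderiv applied
lemma grad_inner {F : EuclideanSpace ℝ (Fin n) → ℝ} (hdiff : Differentiable ℝ F)
    (x v : EuclideanSpace ℝ (Fin n)) : fderiv ℝ F x v = ⟪gradient F x, v⟫ := by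
  have h := (hdiff x).hasGradientAt
  rw [hasGradientAt_iff_hasFDerivAt] at h
  rw [h.fderiv]
  exact InnerProductSpace.toDual_apply_apply

-- subgradient inequality
lemma subgrad {F : EuclideanSpace ℝ (Fin n) → ℝ}
    (hdiff : Differentiable ℝ F) (hconv : ConvexOn ℝ Set.univ F)
    (x y : EuclideanSpace ℝ (Fin n)) :
    fderiv ℝ F x (y - x) ≤ F y - F x := by
  set g : ℝ → ℝ := fun t => F (t • (y - x) + x) with hg
  have hgc : ConvexOn ℝ Set.univ g := by
    have := hconv.comp_affineMap (AffineMap.lineMap x y)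
    simpa [Set.preimage_univ, Function.comp_def, AffineMap.lineMap_apply, hg] using this
  have hd : HasDerivAt g (fderiv ℝ F x (y - x)) 0 := by
    have h1 : HasDerivAt (fun t : ℝ => t • (y - x) + x) (y - x) 0 := by
      simpa using ((hasDerivAt_id (0:ℝ)).smul_const (y - x)).add_const x
    have h2 : HasFDerivAt F (fderiv ℝ F x) ((0:ℝ) • (y - x) + x) := by
      simpa using (hdiff x).hasFDerivAt
    exact h2.comp_hasDerivAt 0 h1
  have := hgc.le_slope_of_hasDerivAt (Set.mem_univ (0:ℝ)) (Set.mem_univ (1:ℝ))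
    one_pos hd
  simpa [slope, hg] using this

-- Euler identity
lemma euler {p : ℝ} (hp : 1 < p) {F : EuclideanSpace ℝ (Fin n) → ℝ}
    (hdiff : Differentiable ℝ F)
    (hhom : ∀ (l : ℝ) (ξ : EuclideanSpace ℝ (Fin n)), F (l • ξ) = |l| ^ p * F ξ)
    (x : EuclideanSpace ℝ (Fin n)) : ⟪gradient F x, x⟫ = p * F x := by
  have hd1 : HasDerivAt (fun l : ℝ => F (l • x)) (fderiv ℝ F x x) 1 := by
    have h1 : HasDerivAt (fun l : ℝ => l • x) x 1 := by
      simpa using (hasDerivAt_id (1:ℝ)).smul_const x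
    have h2 : HasFDerivAt F (fderiv ℝ F x) ((1:ℝ) • x) := by
      simpa using (hdiff x).hasFDerivAt
    exact h2.comp_hasDerivAt 1 h1
  have hd2 : HasDerivAt (fun l : ℝ => F (l • x)) (p * F x) 1 := by
    have h3 : HasDerivAt (fun l : ℝ => l ^ p * F x) (p * F x) 1 := by
      have := (Real.hasDerivAt_rpow_const (x := (1:ℝ)) (p := p)
        (Or.inl one_ne_zero)).mul_const (F x)
      simpa using this
    have heq : (fun l : ℝ => l ^ p * F x) =ᶠ[nhds 1] (fun l : ℝ => F (l • x)) := by
      filter_upwards [eventually_gt_nhds (zero_lt_one : (0:ℝ) < 1)] with l hl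
      rw [hhom l x, abs_of_pos hl]
    exact h3.congr_of_eventuallyEq heq.symm
  have := hd1.unique hd2
  rw [← grad_inner hdiff x x, this]

end aux

theorem generalized_holder {n : ℕ} (p p' : ℝ) (hp : 1 < p) (hp' : p' = p / (p - 1))
    (F : EuclideanSpace ℝ (Fin n) → ℝ)
    (hF0 : ∀ ξ, 0 ≤ F ξ)
    (hdiff : Differentiable ℝ F)
    (hconv : ConvexOn ℝ Set.univ F)
    (hhom : ∀ (l : ℝ) (ξ : EuclideanSpace ℝ (Fin n)), F (l • ξ) = |l| ^ p * F ξ)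
    (ξ η : EuclideanSpace ℝ (Fin n)) :
    |⟪gradient F ξ, η⟫| ≤
      (⟪gradient F ξ, ξ⟫) ^ (1 / p') * (⟪gradient F η, η⟫) ^ (1 / p) := by
  have hp0 : (0:ℝ) < p := lt_trans one_pos hp
  have hp1 : (0:ℝ) < p - 1 := by linarith
  have hip' : 1 / p' = 1 - 1 / p := by
    rw [hp']; field_simp
  have hip'pos : 0 < 1 / p' := by
    rw [hip']; have : 1/p < 1 := by rw [div_lt_one hp0]; exact hp
    linarith
  set A := ⟪gradient F ξ, η⟫ with hA
  -- key inequality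
  have key : ∀ t : ℝ, 0 < t → |A| * t ≤ t ^ p * F η + (p - 1) * F ξ := by
    intro t ht
    have base : ∀ z : EuclideanSpace ℝ (Fin n),
        ⟪gradient F ξ, z⟫ ≤ F z + (p - 1) * F ξ := by
      intro z
      have h := subgrad hdiff hconv ξ z
      rw [grad_inner hdiff] at h
      have : ⟪gradient F ξ, z - ξ⟫ = ⟪gradient F ξ, z⟫ - ⟪gradient F ξ, ξ⟫ :=
        inner_sub_right _ _ _
      rw [this, euler hp hdiff hhom ξ] at h
      linarith
    have h1 := base (t • η)
    have h2 := base ((-t) • η)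
    rw [real_inner_smul_right] at h1
    rw [real_inner_smul_right] at h2
    rw [hhom t η, abs_of_pos ht] at h1
    rw [hhom (-t) η, abs_neg, abs_of_pos ht] at h2
    rcases abs_cases A with ⟨h, _⟩ | ⟨h, _⟩
    · rw [h]; nlinarith
    · rw [h]; nlinarith
  -- Young-optimized bound for positive a b
  have step : ∀ a b : ℝ, 0 < a → 0 < b → F ξ ≤ a → F η ≤ b →
      |A| ≤ p * a ^ (1/p') * b ^ (1/p) := by
    intro a b ha hb hfa hfb
    set t : ℝ := (a / b) ^ (1/p) with ht
    have htpos : 0 < t := Real.rpow_pos_of_pos (div_pos ha hb) _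
    have htp : t ^ p = a / b := by
      rw [ht, ← Real.rpow_mul (div_pos ha hb).le, one_div_mul_cancel hp0.ne',
        Real.rpow_one]
    have hk := key t htpos
    have hk2 : |A| * t ≤ t ^ p * b + (p - 1) * a := by
      have h1 : t ^ p * F η ≤ t ^ p * b :=
        mul_le_mul_of_nonneg_left hfb (Real.rpow_nonneg htpos.le _)
      have h2 : (p-1) * F ξ ≤ (p-1) * a := mul_le_mul_of_nonneg_left hfa hp1.le
      linarith [hk]
    rw [htp, div_mul_cancel₀ _ hb.ne'] at hk2
    have hk3 : |A| * t ≤ p * a := by linarith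
    have hfin : p * a / t = p * a ^ (1/p') * b ^ (1/p) := by
      rw [ht, Real.div_rpow ha.le hb.le, hip']
      rw [Real.rpow_sub ha, Real.rpow_one]
      field_simp
    calc |A| = |A| * t / t := by field_simp
    _ ≤ p * a / t := div_le_div_of_nonneg_right hk3 htpos.le
    _ = _ := hfin
  -- limit ε → 0⁺
  have main : |A| ≤ p * (F ξ) ^ (1/p') * (F η) ^ (1/p) := by
    have hev : ∀ᶠ ε in nhdsWithin (0:ℝ) (Set.Ioi 0),
        |A| ≤ p * (F ξ + ε) ^ (1/p') * (F η + ε) ^ (1/p) := by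
      filter_upwards [self_mem_nhdsWithin] with ε (hε : 0 < ε)
      exact step _ _ (by linarith [hF0 ξ]) (by linarith [hF0 η])
        (by linarith) (by linarith)
    have htend : Filter.Tendsto
        (fun ε : ℝ => p * (F ξ + ε) ^ (1/p') * (F η + ε) ^ (1/p))
        (nhdsWithin (0:ℝ) (Set.Ioi 0))
        (nhds (p * (F ξ) ^ (1/p') * (F η) ^ (1/p))) := by
      have c1 : ContinuousAt (fun ε : ℝ => (F ξ + ε) ^ (1/p')) 0 := by
        apply ContinuousAt.comp (g := fun x : ℝ => x ^ (1/p'))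
        · simpa using Real.continuousAt_rpow_const (F ξ + 0) (1/p') (Or.inr hip'pos.le)
        · fun_prop
      have c2 : ContinuousAt (fun ε : ℝ => (F η + ε) ^ (1/p)) 0 := by
        apply ContinuousAt.comp (g := fun x : ℝ => x ^ (1/p))
        · simpa using Real.continuousAt_rpow_const (F η + 0) (1/p)
            (Or.inr (by positivity : (0:ℝ) ≤ 1/p))
        · fun_prop
      have hct : ContinuousAt
          (fun ε : ℝ => p * (F ξ + ε) ^ (1/p') * (F η + ε) ^ (1/p)) 0 :=
        (continuousAt_const.mul c1).mul c2
      have := hct.tendsto.mono_left (nhdsWithin_le_nhds (s := Set.Ioi (0:ℝ)))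
      simpa using this
    exact ge_of_tendsto htend hev
  -- rewrite RHS
  rw [euler hp hdiff hhom ξ, euler hp hdiff hhom η]
  have hrhs : (p * F ξ) ^ (1/p') * (p * F η) ^ (1/p)
      = p * (F ξ) ^ (1/p') * (F η) ^ (1/p) := by
    rw [Real.mul_rpow hp0.le (hF0 ξ), Real.mul_rpow hp0.le (hF0 η)]
    have : p ^ (1/p') * p ^ (1/p) = p := by
      rw [← Real.rpow_add hp0]
      rw [hip']
      simpa using Real.rpow_one p
    calc p ^ (1/p') * (F ξ) ^ (1/p') * (p ^ (1/p) * (F η) ^ (1/p))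
        = (p ^ (1/p') * p ^ (1/p)) * ((F ξ) ^ (1/p') * (F η) ^ (1/p)) := by ring
    _ = _ := by rw [this]; ring
  rw [hrhs]
  exact main
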